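/- Let X be a topological vector space, T a continuous linear operator on X, and x ∈ X. For non-empty open sets U, V ⊆ X and n ∈ ℕ with Tⁿ(U) ∩ V ≠ ∅, set Uₙ = U ∩ T^{−n}(V). Then N(x, Uₙ) − N(x, Uₙ) + n ⊆ N(U, V), where N(x, W) = {m ∈ ℕ : Tᵐx ∈ W} and N(U, V) = {m ∈ ℕ : Tᵐ(U) ∩ V ≠ ∅}, and the difference set is taken over pairs s₁ ≥ s₂ in N(x, Uₙ) (giving s₁ − s₂ + n), as well as over pairs with s₁ ≤ s₂ when s₁ − s₂ + n ≥ 0. -/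

import Mathlib

/-- If `Tⁿ(U) ∩ V ≠ ∅` and `Uₙ = U ∩ T⁻ⁿ(V)`, then
`N(x, Uₙ) − N(x, Uₙ) + n ⊆ N(U, V)`. -/
theorem diff_of_return_times_subset {X : Type*} [AddCommGroup X] [Module ℝ X]
    [TopologicalSpace X] [IsTopologicalAddGroup X] [ContinuousSMul ℝ X]
    (T : X →L[ℝ] X) (x : X) (U V : Set X) (hU : IsOpen U) (hV : IsOpen V)
    (hUne : U.Nonempty) (hVne : V.Nonempty) (n : ℕ)
    (hn : ((T ^ n) '' U ∩ V).Nonempty) :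
    ∀ s₁ s₂ : ℕ, (T ^ s₁) x ∈ U ∩ (T ^ n) ⁻¹' V → (T ^ s₂) x ∈ U ∩ (T ^ n) ⁻¹' V →
      s₂ ≤ s₁ + n → ((T ^ (s₁ + n - s₂)) '' U ∩ V).Nonempty := by
  intro s₁ s₂ h₁ h₂ hle
  refine ⟨(T ^ (s₁ + n - s₂)) ((T ^ s₂) x), ⟨(T ^ s₂) x, h₂.1, rfl⟩, ?_⟩
  have key : (T ^ (s₁ + n - s₂)) ((T ^ s₂) x) = (T ^ n) ((T ^ s₁) x) := by
    have : (T ^ (s₁ + n - s₂)) ((T ^ s₂) x) = (T ^ (s₁ + n - s₂ + s₂)) x := by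
      rw [pow_add]; rfl
    rw [this, Nat.sub_add_cancel hle, add_comm s₁ n, pow_add]; rfl
  rw [key]
  exact h₁.2
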